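/- Let q be a prime power, b a positive integer, and V a finite set of points in F_q^b with binomial(|V|,2) < q. Then there exists an invertible linear transformation T : F_q^b → F_q^b such that the images under T of the points in V all have pairwise distinct first coordinates. -/

import Mathlib

open Finset Matrix

lemma hyperplane_card {b : ℕ} (F : Type) [Field F] [Fintype F] [DecidableEq F]
    (w : Fin b → F) (hw : w ≠ 0) :
    (Finset.univ.filter fun c : Fin b → F => c ⬝ᵥ w = 0).card
      = Fintype.card F ^ (b - 1) := by
  classical
  obtain ⟨j, hj⟩ : ∃ j, w j ≠ 0 := by
    by_contra h
    push_neg at h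
    exact hw (funext h)
  let g : (Fin b → F) →ₗ[F] F :=
    { toFun := fun c => c ⬝ᵥ w
      map_add' := fun x y => add_dotProduct x y w
      map_smul' := fun a x => smul_dotProduct a x w }
  have hsurj : Function.Surjective g := by
    intro a
    refine ⟨Pi.single j (a / w j), ?_⟩
    show Pi.single j (a / w j) ⬝ᵥ w = a
    rw [single_dotProduct]
    field_simp
  have hrange : LinearMap.range g = ⊤ := LinearMap.range_eq_top.mpr hsurj
  have hfr : Module.finrank F (LinearMap.ker g) = b - 1 := by
    have h1 := LinearMap.finrank_range_add_finrank_ker g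
    rw [hrange, finrank_top, Module.finrank_self, Module.finrank_fin_fun] at h1
    omega
  have hcard : Fintype.card (LinearMap.ker g) = Fintype.card F ^ (b - 1) := by
    rw [Module.card_eq_pow_finrank (K := F), hfr]
  rw [← hcard, ← Fintype.card_subtype]
  exact (Fintype.card_congr (Equiv.subtypeEquivRight fun c => by
    simp [LinearMap.mem_ker, g])).symm

/-- Lemma 2.1: if `V ⊆ F_q^b` has `C(|V|,2) < q`, there is an invertible linear
transformation making the first coordinates of all points of `V` distinct. -/
theorem simple_after_linear_transformation
    (q b : ℕ) (hb : 0 < b) (F : Type) [Field F] [Fintype F]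
    (hq : Fintype.card F = q) (hpp : IsPrimePow q)
    (V : Finset (Fin b → F)) (hV : (V.card.choose 2) < q) :
    ∃ T : (Fin b → F) ≃ₗ[F] (Fin b → F),
      Set.InjOn (fun v : Fin b → F => T v ⟨0, hb⟩) (V : Set (Fin b → F)) := by
  classical
  rcases le_or_gt V.card 1 with h1 | h2
  · exact ⟨LinearEquiv.refl F _, fun u hu v hv _ => Finset.card_le_one.mp h1 u hu v hv⟩
  have hq0 : 0 < q := hpp.pos
  have hqb : Fintype.card (Fin b → F) = q ^ b := by
    rw [Fintype.card_fun, hq, Fintype.card_fin]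
  -- the set of "bad" functionals
  set Bad : Finset (Fin b → F) :=
    (V.powersetCard 2).biUnion (fun s =>
      Finset.univ.filter fun c => ∃ u ∈ s, ∃ v ∈ s, u ≠ v ∧ c ⬝ᵥ (u - v) = 0) with hBad
  have hbadcard : Bad.card < q ^ b := by
    calc Bad.card ≤ ∑ s ∈ V.powersetCard 2,
        (Finset.univ.filter fun c : Fin b → F =>
          ∃ u ∈ s, ∃ v ∈ s, u ≠ v ∧ c ⬝ᵥ (u - v) = 0).card :=
          Finset.card_biUnion_le
      _ ≤ ∑ _s ∈ V.powersetCard 2, q ^ (b - 1) := by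
          apply Finset.sum_le_sum
          intro s hs
          obtain ⟨hsub, hcard2⟩ := Finset.mem_powersetCard.mp hs
          obtain ⟨u, v, huv, rfl⟩ := Finset.card_eq_two.mp hcard2
          have hsub2 : (Finset.univ.filter fun c : Fin b → F =>
              ∃ u' ∈ ({u, v} : Finset _), ∃ v' ∈ ({u, v} : Finset _),
                u' ≠ v' ∧ c ⬝ᵥ (u' - v') = 0) ⊆
              Finset.univ.filter fun c : Fin b → F => c ⬝ᵥ (u - v) = 0 := by
            intro c hc
            simp only [Finset.mem_filter, Finset.mem_univ, true_and,
              Finset.mem_insert, Finset.mem_singleton] at hc ⊢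
            obtain ⟨u', hu', v', hv', hne, hdot⟩ := hc
            rcases hu' with h1 | h1 <;> rcases hv' with h2 | h2
            · exact absurd (h1.trans h2.symm) hne
            · rw [h1, h2] at hdot; exact hdot
            · rw [h1, h2] at hdot
              have hcomm : c ⬝ᵥ (u - v) = -(c ⬝ᵥ (v - u)) := by
                rw [← dotProduct_neg, neg_sub]
              rw [hcomm, hdot, neg_zero]
            · exact absurd (h1.trans h2.symm) hne
          calc _ ≤ (Finset.univ.filter fun c : Fin b → F => c ⬝ᵥ (u - v) = 0).card :=
                Finset.card_le_card hsub2
            _ = Fintype.card F ^ (b - 1) :=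
                hyperplane_card F (u - v) (sub_ne_zero.mpr huv)
            _ = q ^ (b - 1) := by rw [hq]
      _ = V.card.choose 2 * q ^ (b - 1) := by
          rw [Finset.sum_const, Finset.card_powersetCard, smul_eq_mul]
      _ < q * q ^ (b - 1) := by
          exact Nat.mul_lt_mul_of_lt_of_le hV le_rfl (Nat.pow_pos hq0)
      _ = q ^ b := by
          rw [← pow_succ']
          congr 1
          omega
  obtain ⟨c, hc⟩ : ∃ c, c ∉ Bad := by
    by_contra h
    push_neg at h
    have : (Finset.univ : Finset (Fin b → F)).card ≤ Bad.card :=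
      Finset.card_le_card fun x _ => h x
    rw [Finset.card_univ, hqb] at this
    omega
  have hsep : ∀ u ∈ V, ∀ v ∈ V, u ≠ v → c ⬝ᵥ u ≠ c ⬝ᵥ v := by
    intro u hu v hv huv heq
    apply hc
    rw [hBad]
    apply Finset.mem_biUnion.mpr
    refine ⟨{u, v}, ?_, ?_⟩
    · refine Finset.mem_powersetCard.mpr ⟨?_, ?_⟩
      · intro x hx
        rcases Finset.mem_insert.mp hx with rfl | hx
        · exact hu
        · rw [Finset.mem_singleton.mp hx]; exact hv
      · rw [Finset.card_insert_of_notMem (by simpa using huv), Finset.card_singleton]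
    · simp only [Finset.mem_filter, Finset.mem_univ, true_and]
      exact ⟨u, by simp, v, by simp, huv, by rw [dotProduct_sub, heq, sub_self]⟩
  obtain ⟨u₀, hu₀, v₀, hv₀, huv₀⟩ : ∃ u ∈ V, ∃ v ∈ V, u ≠ v := Finset.one_lt_card.mp h2
  obtain ⟨j, hj⟩ : ∃ j, c j ≠ 0 := by
    by_contra h
    push_neg at h
    apply hsep u₀ hu₀ v₀ hv₀ huv₀
    simp [dotProduct, h]
  set z : Fin b := ⟨0, hb⟩ with hz
  set σ : Equiv.Perm (Fin b) := Equiv.swap z j with hσ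
  set Tlin : (Fin b → F) →ₗ[F] (Fin b → F) :=
    { toFun := fun v i => if i = z then c ⬝ᵥ v else v (σ i)
      map_add' := by
        intro x y
        funext i
        by_cases h : i = z <;> simp [h, dotProduct_add]
      map_smul' := by
        intro a x
        funext i
        by_cases h : i = z <;> simp [h, dotProduct_smul] } with hTlin
  have hinj : Function.Injective Tlin := by
    rw [← LinearMap.ker_eq_bot, LinearMap.ker_eq_bot']
    intro v hv
    have hv' : ∀ i, (if i = z then c ⬝ᵥ v else v (σ i)) = 0 := fun i => congrFun hv i
    have hk : ∀ k, k ≠ j → v k = 0 := by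
      intro k hkj
      have h1 : σ k ≠ z := by
        rw [hσ]
        intro h
        apply hkj
        have := congrArg (Equiv.swap z j) h
        rwa [Equiv.swap_apply_self, Equiv.swap_apply_left] at this
      have := hv' (σ k)
      rw [if_neg h1] at this
      rwa [hσ, Equiv.swap_apply_self] at this
    have h0 : c ⬝ᵥ v = 0 := by simpa using hv' z
    have hvj : v j = 0 := by
      have hsum : c ⬝ᵥ v = c j * v j := by
        rw [dotProduct]
        apply Finset.sum_eq_single j
        · intro k _ hkj
          rw [hk k hkj, mul_zero]
        · intro h
          exact absurd (Finset.mem_univ j) h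
      rw [hsum] at h0
      exact (mul_eq_zero.mp h0).resolve_left hj
    funext k
    by_cases hkj : k = j
    · rw [hkj]; exact hvj
    · exact hk k hkj
  refine ⟨LinearEquiv.ofBijective Tlin
      ⟨hinj, (LinearMap.injective_iff_surjective).mp hinj⟩, ?_⟩
  intro u hu v hv h
  by_contra hne
  apply hsep u hu v hv hne
  have h' : Tlin u z = Tlin v z := h
  simpa [hTlin] using h'
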